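/- Let F be a finite field, m a positive natural number, (e, S), (e', S') ∈ F × F^m with (e, S) ≠ (e', S'), and o, o' ∈ F. Then the number of pairs (c, d) ∈ F × F such that h'_{c,d,e}(S) = o and h'_{c,d,e'}(S') = o' is at most m + 1. -/

import Mathlib

open Polynomial

theorem dske_secret_tag_collision_count {F : Type*} [Field F] [Fintype F]
    (m : ℕ) (hm : 0 < m) (e e' : F) (S S' : Fin m → F)
    (hne : (e, S) ≠ (e', S')) (o o' : F) :
    Nat.card {cd : F × F //
      cd.2 + cd.1 * e + ∑ j : Fin m, cd.1 ^ (j.1 + 2) * S j = o ∧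
      cd.2 + cd.1 * e' + ∑ j : Fin m, cd.1 ^ (j.1 + 2) * S' j = o'} ≤ m + 1 := by
  classical
  set p : F[X] := C (o' - o) + C (e - e') * X + ∑ j : Fin m, C (S j - S' j) * X ^ (j.1 + 2)
    with hp
  have hpne : p ≠ 0 := by
    have h : e ≠ e' ∨ ∃ j, S j ≠ S' j := by
      by_contra h
      push_neg at h
      exact hne (Prod.ext h.1 (funext h.2))
    rcases h with h | ⟨j, hj⟩
    · intro h0
      have : p.coeff 1 = e - e' := by
        simp [hp, coeff_C, sub_mul, coeff_sub, coeff_C_mul, Polynomial.coeff_X_pow]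
      rw [h0] at this
      simp at this
      exact h (sub_eq_zero.mp this.symm)
    · intro h0
      have : p.coeff (j.1 + 2) = S j - S' j := by
        simp only [hp, coeff_add, coeff_C, coeff_C_mul, coeff_X, finset_sum_coeff,
          Polynomial.coeff_X_pow]
        rw [Finset.sum_eq_single j]
        · simp
        · intro b _ hb
          have : b.1 + 2 ≠ j.1 + 2 := by
            simpa [Fin.ext_iff] using hb
          simp [Ne.symm this]
          exact fun h => absurd (Fin.ext h) (Ne.symm hb)
        · simp
      rw [h0] at this
      simp at this
      exact hj (sub_eq_zero.mp this.symm)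
  have hdeg : p.natDegree ≤ m + 1 := by
    refine (natDegree_add_le _ _).trans (max_le ((natDegree_add_le _ _).trans (max_le ?_ ?_)) ?_)
    · simp
    · exact (natDegree_C_mul_le _ _).trans (by simp)
    · refine (natDegree_sum_le _ _).trans ?_
      rw [Finset.fold_max_le]
      refine ⟨Nat.zero_le _, fun j _ => ?_⟩
      refine (natDegree_C_mul_le _ _).trans ?_
      simpa using Nat.add_le_add_right (Nat.le_of_lt_succ (by simpa using j.2)) 2
  have hroot : ∀ cd : F × F,
      (cd.2 + cd.1 * e + ∑ j : Fin m, cd.1 ^ (j.1 + 2) * S j = o ∧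
       cd.2 + cd.1 * e' + ∑ j : Fin m, cd.1 ^ (j.1 + 2) * S' j = o') →
      p.eval cd.1 = 0 := by
    rintro ⟨c, d⟩ ⟨h1, h2⟩
    simp only [hp, eval_add, eval_C, eval_mul, eval_X, eval_finset_sum, eval_pow]
    have hsum : ∑ j : Fin m, (S j - S' j) * c ^ (j.1 + 2)
        = (∑ j : Fin m, c ^ (j.1 + 2) * S j) - ∑ j : Fin m, c ^ (j.1 + 2) * S' j := by
      rw [← Finset.sum_sub_distrib]
      exact Finset.sum_congr rfl fun j _ => by ring
    simp only at h1 h2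
    rw [hsum]
    linear_combination h1 - h2
  have h1 : Nat.card {cd : F × F //
      cd.2 + cd.1 * e + ∑ j : Fin m, cd.1 ^ (j.1 + 2) * S j = o ∧
      cd.2 + cd.1 * e' + ∑ j : Fin m, cd.1 ^ (j.1 + 2) * S' j = o'} ≤
      Nat.card {c : F // c ∈ p.roots.toFinset} := by
    refine Nat.card_le_card_of_injective
      (fun cd => ⟨cd.1.1, by
        rw [Multiset.mem_toFinset, mem_roots hpne]
        exact hroot cd.1 cd.2⟩) ?_
    rintro ⟨⟨c, d⟩, hcd⟩ ⟨⟨c', d'⟩, hcd'⟩ h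
    have hc : c = c' := by simpa using congrArg Subtype.val h
    subst hc
    have : d = d' := by
      have := hcd.1.trans hcd'.1.symm
      simpa using this
    simp [this]
  refine h1.trans ?_
  rw [Nat.card_eq_fintype_card, Fintype.card_coe]
  calc p.roots.toFinset.card ≤ Multiset.card p.roots := Multiset.toFinset_card_le _
    _ ≤ p.natDegree := p.card_roots' 
    _ ≤ m + 1 := hdeg
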